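/- Let a, b ∈ ℂ, let ρ ∈ (0, 1/(15π)), and use the admissible-sequence definitions of b_k(λ,t) and b′_k(λ,t) for the Mathieu potential. There exist K > 0 and N ∈ ℕ such that for all integers n > N, all t ∈ [0, ρ], and all λ ∈ U(n,t,ρ): the series B(λ,t) = Σ_{k≥1} b_k(λ,t) and B′(λ,t) = Σ_{k≥1} b′_k(λ,t) converge absolutely, |B(λ,t)| ≤ K·n^{−5}, and |B′(λ,t)| ≤ K·n^{−5}. -/

import Mathlib

open Finset

namespace Mathieu

/-- `±1` value attached to a boolean index. -/
def sgn (x : Bool) : ℤ := if x then 1 else -1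

/-- Partial sum `n₁ + ⋯ + n_s` of the `±1` sequence encoded by `v`. -/
def psum {k : ℕ} (v : Fin k → Bool) (s : ℕ) : ℤ :=
  ∑ i ∈ Finset.univ.filter (fun i : Fin k => (i : ℕ) < s), sgn (v i)

/-- `n`-admissible sequences: all partial sums avoid `0` and `2n`. -/
def Admissible (n k : ℕ) (v : Fin k → Bool) : Prop :=
  ∀ s : Fin k, psum v ((s : ℕ) + 1) ≠ 0 ∧ psum v ((s : ℕ) + 1) ≠ 2 * (n : ℤ)

/-- `n`-coadmissible sequences: all partial sums avoid `0` and `-2n`. -/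
def Coadmissible (n k : ℕ) (v : Fin k → Bool) : Prop :=
  ∀ s : Fin k, psum v ((s : ℕ) + 1) ≠ 0 ∧ psum v ((s : ℕ) + 1) ≠ -(2 * (n : ℤ))

instance (n k : ℕ) : DecidablePred (Admissible n k) := fun v => by
  unfold Admissible; infer_instance

instance (n k : ℕ) : DecidablePred (Coadmissible n k) := fun v => by
  unfold Coadmissible; infer_instance

/-- Fourier coefficients of the Mathieu potential: `q₋₁ = a`, `q₁ = b`, else `0`. -/
noncomputable def qc (a b : ℂ) (m : ℤ) : ℂ :=
  if m = -1 then a else if m = 1 then b else 0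

/-- Resolvent factor `(λ - (2π(n - j) + t)²)⁻¹`. -/
noncomputable def denom (n : ℕ) (lam : ℂ) (t : ℝ) (j : ℤ) : ℂ :=
  (lam - (((2 * Real.pi * ((n : ℝ) - (j : ℝ)) + t) ^ 2 : ℝ) : ℂ))⁻¹

/-- Resolvent factor `(λ - (2π(n + j) - t)²)⁻¹`. -/
noncomputable def denom' (n : ℕ) (lam : ℂ) (t : ℝ) (j : ℤ) : ℂ :=
  (lam - (((2 * Real.pi * ((n : ℝ) + (j : ℝ)) - t) ^ 2 : ℝ) : ℂ))⁻¹

/-- The term `a_k(λ,t)` of the perturbation series (formula (13)). -/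
noncomputable def ak (a b : ℂ) (n k : ℕ) (lam : ℂ) (t : ℝ) : ℂ :=
  ∑ v ∈ Finset.univ.filter (Admissible n k),
    qc a b (-(psum v k)) *
      ∏ i : Fin k, (qc a b (sgn (v i)) * denom n lam t (psum v ((i : ℕ) + 1)))

/-- The term `b_k(λ,t)` of the perturbation series (formula (14)). -/
noncomputable def bk (a b : ℂ) (n k : ℕ) (lam : ℂ) (t : ℝ) : ℂ :=
  ∑ v ∈ Finset.univ.filter (Admissible n k),
    qc a b (2 * (n : ℤ) - psum v k) *
      ∏ i : Fin k, (qc a b (sgn (v i)) * denom n lam t (psum v ((i : ℕ) + 1)))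

/-- The term `a′_k(λ,t)` of the perturbation series (formula (17)). -/
noncomputable def ak' (a b : ℂ) (n k : ℕ) (lam : ℂ) (t : ℝ) : ℂ :=
  ∑ v ∈ Finset.univ.filter (Coadmissible n k),
    qc a b (-(psum v k)) *
      ∏ i : Fin k, (qc a b (sgn (v i)) * denom' n lam t (psum v ((i : ℕ) + 1)))

/-- The term `b′_k(λ,t)` of the perturbation series (formula (18)). -/
noncomputable def bk' (a b : ℂ) (n k : ℕ) (lam : ℂ) (t : ℝ) : ℂ :=
  ∑ v ∈ Finset.univ.filter (Coadmissible n k),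
    qc a b (-(2 * (n : ℤ)) - psum v k) *
      ∏ i : Fin k, (qc a b (sgn (v i)) * denom' n lam t (psum v ((i : ℕ) + 1)))

/-- `A(λ,t) = Σ_{k≥1} a_k(λ,t)`. -/
noncomputable def Afun (a b : ℂ) (n : ℕ) (lam : ℂ) (t : ℝ) : ℂ := ∑' k : ℕ, ak a b n (k + 1) lam t

/-- `A′(λ,t) = Σ_{k≥1} a′_k(λ,t)`. -/
noncomputable def A'fun (a b : ℂ) (n : ℕ) (lam : ℂ) (t : ℝ) : ℂ := ∑' k : ℕ, ak' a b n (k + 1) lam t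

/-- `B(λ,t) = Σ_{k≥1} b_k(λ,t)`. -/
noncomputable def Bfun (a b : ℂ) (n : ℕ) (lam : ℂ) (t : ℝ) : ℂ := ∑' k : ℕ, bk a b n (k + 1) lam t

/-- `B′(λ,t) = Σ_{k≥1} b′_k(λ,t)`. -/
noncomputable def B'fun (a b : ℂ) (n : ℕ) (lam : ℂ) (t : ℝ) : ℂ := ∑' k : ℕ, bk' a b n (k + 1) lam t

end Mathieu

open Mathieu
namespace MathieuAux

lemma abs_qc_le (a b : ℂ) (m : ℤ) :
    ‖qc a b m‖ ≤ max (‖a‖) (‖b‖) + 1 := by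
  have h0 : (0:ℝ) ≤ max (‖a‖) (‖b‖) :=
    le_max_of_le_left (norm_nonneg a)
  unfold qc
  split_ifs
  · nlinarith [le_max_left (‖a‖) (‖b‖)]
  · nlinarith [le_max_right (‖a‖) (‖b‖)]
  · simpa using by linarith

lemma qc_eq_zero (a b : ℂ) {m : ℤ} (h1 : m ≠ -1) (h2 : m ≠ 1) : qc a b m = 0 := by
  simp [qc, h1, h2]

lemma abs_psum_le {k : ℕ} (v : Fin k → Bool) (s : ℕ) : |psum v s| ≤ (s : ℤ) := by
  classical
  unfold psum
  calc |∑ i ∈ Finset.univ.filter (fun i : Fin k => (i:ℕ) < s), sgn (v i)|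
      ≤ ∑ i ∈ Finset.univ.filter (fun i : Fin k => (i:ℕ) < s), |sgn (v i)| :=
        Finset.abs_sum_le_sum_abs _ _
    _ = ∑ _i ∈ Finset.univ.filter (fun i : Fin k => (i:ℕ) < s), (1:ℤ) :=
        Finset.sum_congr rfl (fun i _ => by cases h : v i <;> simp [sgn, h])
    _ = ((Finset.univ.filter (fun i : Fin k => (i:ℕ) < s)).card : ℤ) := by simp
    _ ≤ (s : ℤ) := by
        have hc : (Finset.univ.filter (fun i : Fin k => (i:ℕ) < s)).card ≤ (Finset.range s).card :=
          Finset.card_le_card_of_injOn (fun i : Fin k => (i : ℕ))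
            (fun i hi => Finset.mem_range.mpr (by
              simp at hi
              exact hi))
            (fun i _ j _ h => Fin.ext h)
        rw [Finset.card_range] at hc
        exact_mod_cast hc

lemma jbound (n : ℕ) {j : ℤ} (hj0 : j ≠ 0) (hj2 : j ≠ 2*(n:ℤ)) :
    (n:ℤ) ≤ |j * (2*(n:ℤ) - j)| := by
  rcases lt_trichotomy j 0 with h | h | h
  · have h1 : j ≤ -1 := by omega
    have h2 : 2*(n:ℤ) + 1 ≤ 2*(n:ℤ) - j := by omega
    have hp : j * (2*(n:ℤ) - j) ≤ -(n:ℤ) := by nlinarith [Int.natCast_nonneg n]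
    calc (n:ℤ) ≤ -(j * (2*(n:ℤ) - j)) := by linarith
    _ ≤ |j * (2*(n:ℤ) - j)| := neg_le_abs _
  · exact absurd h hj0
  · rcases lt_or_ge j (2*(n:ℤ)) with h' | h'
    · have h1 : 1 ≤ j := h
      have hp : (n:ℤ) ≤ j * (2*(n:ℤ) - j) := by nlinarith [mul_nonneg (by omega : (0:ℤ) ≤ j - 1) (by omega : (0:ℤ) ≤ 2*(n:ℤ) - 1 - j)]
      exact hp.trans (le_abs_self _)
    · have h'' : 2*(n:ℤ) + 1 ≤ j := by omega
      have hp : j * (2*(n:ℤ) - j) ≤ -(n:ℤ) := by nlinarith [Int.natCast_nonneg n]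
      calc (n:ℤ) ≤ -(j * (2*(n:ℤ) - j)) := by linarith
      _ ≤ |j * (2*(n:ℤ) - j)| := neg_le_abs _

end MathieuAux
namespace MathieuAux

lemma abs_denom_le (n : ℕ) (hn : 1 ≤ n) {ρ t : ℝ} (hρ : 15 * Real.pi * ρ ≤ 1)
    (ht0 : 0 ≤ t) (htρ : t ≤ ρ) {lam : ℂ}
    (hlam : ‖lam - (((2 * Real.pi * (n : ℝ) + t) ^ 2 : ℝ) : ℂ)‖ ≤ 15 * Real.pi * (n : ℝ) * ρ)
    {j : ℤ} (hj0 : j ≠ 0) (hj2 : j ≠ 2*(n:ℤ)) :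
    ‖denom n lam t j‖ ≤ ((n:ℝ))⁻¹ := by
  have hπ := Real.pi_gt_three
  have hρ0 : 0 ≤ ρ := le_trans ht0 htρ
  have ht45 : t ≤ 1/45 := by nlinarith
  have hnpos : (0:ℝ) < n := by exact_mod_cast hn
  set A : ℝ := (2 * Real.pi * (n : ℝ) + t) ^ 2 with hA
  set X : ℝ := (2 * Real.pi * ((n : ℝ) - (j : ℝ)) + t) ^ 2 with hX
  have hfac : A - X = (2 * Real.pi * (j:ℝ)) * (2 * Real.pi * (2*(n:ℝ) - (j:ℝ)) + 2*t) := by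
    rw [hA, hX]; ring
  -- bound on the second factor
  have hw : 4 * |2*(n:ℝ) - (j:ℝ)| ≤ |2 * Real.pi * (2*(n:ℝ) - (j:ℝ)) + 2*t| := by
    have hcase : (1:ℤ) ≤ 2*(n:ℤ) - j ∨ 2*(n:ℤ) - j ≤ -1 := by omega
    rcases hcase with h | h
    · have h' : (1:ℝ) ≤ 2*(n:ℝ) - (j:ℝ) := by exact_mod_cast h
      rw [abs_of_nonneg (by linarith), abs_of_pos (by nlinarith)]
      nlinarith
    · have h' : 2*(n:ℝ) - (j:ℝ) ≤ -1 := by exact_mod_cast h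
      rw [abs_of_neg (by linarith), abs_of_neg (by nlinarith)]
      nlinarith
  -- bound |A - X| from below
  have hjr : (n:ℝ) ≤ |(j:ℝ) * (2*(n:ℝ) - (j:ℝ))| := by
    exact_mod_cast jbound n hj0 hj2
  have hAX : 24 * (n:ℝ) ≤ |A - X| := by
    rw [hfac, abs_mul, abs_mul]
    have h1 : |2 * Real.pi| = 2 * Real.pi := abs_of_pos (by linarith)
    rw [h1]
    rw [abs_mul] at hjr
    have hkey : 2*Real.pi * |(j:ℝ)| * (4 * |2*(n:ℝ)-(j:ℝ)|) ≤
        2*Real.pi*|(j:ℝ)| * |2 * Real.pi * (2 * ↑n - ↑j) + 2 * t| :=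
      mul_le_mul_of_nonneg_left hw (by positivity)
    nlinarith [mul_le_mul_of_nonneg_left hjr (by positivity : (0:ℝ) ≤ 8*Real.pi),
      mul_nonneg (by linarith : (0:ℝ) ≤ Real.pi - 3) hnpos.le]
  -- triangle inequality
  have htri : ‖(A:ℂ) - (X:ℂ)‖ ≤
      ‖lam - (X:ℂ)‖ + ‖lam - (A:ℂ)‖ := by
    have h := norm_sub_le_norm_sub_add_norm_sub ((A:ℝ):ℂ) lam ((X:ℝ):ℂ)
    rwa [norm_sub_rev ((A:ℝ):ℂ) lam, add_comm] at h
  have hax : ‖(A:ℂ) - (X:ℂ)‖ = |A - X| := by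
    rw [← Complex.ofReal_sub, Complex.norm_real, Real.norm_eq_abs]
  have hlamA : ‖lam - (A:ℂ)‖ ≤ (n:ℝ) := by
    refine le_trans hlam ?_
    nlinarith
  have hlow : (n:ℝ) ≤ ‖lam - (X:ℂ)‖ := by
    rw [hax] at htri
    linarith [hAX]
  have hXdenom : denom n lam t j = (lam - (X:ℂ))⁻¹ := rfl
  rw [hXdenom, norm_inv]
  exact inv_anti₀ hnpos hlow

end MathieuAux
namespace MathieuAux

lemma abs_denom'_le (n : ℕ) (hn : 1 ≤ n) {ρ t : ℝ} (hρ : 15 * Real.pi * ρ ≤ 1)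
    (ht0 : 0 ≤ t) (htρ : t ≤ ρ) {lam : ℂ}
    (hlam : ‖lam - (((2 * Real.pi * (n : ℝ) + t) ^ 2 : ℝ) : ℂ)‖ ≤ 15 * Real.pi * (n : ℝ) * ρ)
    {j : ℤ} (hj0 : j ≠ 0) (hj2 : j ≠ -(2*(n:ℤ))) :
    ‖denom' n lam t j‖ ≤ ((n:ℝ))⁻¹ := by
  have hπ := Real.pi_gt_three
  have hρ0 : 0 ≤ ρ := le_trans ht0 htρ
  have ht45 : t ≤ 1/45 := by nlinarith
  have hnpos : (0:ℝ) < n := by exact_mod_cast hn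
  set A : ℝ := (2 * Real.pi * (n : ℝ) + t) ^ 2 with hA
  set X : ℝ := (2 * Real.pi * ((n : ℝ) + (j : ℝ)) - t) ^ 2 with hX
  have hfac : A - X = (2*t - 2 * Real.pi * (j:ℝ)) * (2 * Real.pi * (2*(n:ℝ) + (j:ℝ))) := by
    rw [hA, hX]; ring
  have hw : 4 * |(j:ℝ)| ≤ |2*t - 2 * Real.pi * (j:ℝ)| := by
    have hcase : (1:ℤ) ≤ j ∨ j ≤ -1 := by omega
    rcases hcase with h | h
    · have h' : (1:ℝ) ≤ (j:ℝ) := by exact_mod_cast h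
      rw [abs_of_nonneg (by linarith), abs_of_neg (by nlinarith)]
      nlinarith
    · have h' : (j:ℝ) ≤ -1 := by exact_mod_cast h
      rw [abs_of_neg (by linarith), abs_of_pos (by nlinarith)]
      nlinarith
  have hjr : (n:ℝ) ≤ |(-(j:ℝ)) * (2*(n:ℝ) - (-(j:ℝ)))| := by
    exact_mod_cast jbound n (neg_ne_zero.mpr hj0) (by omega : -j ≠ 2*(n:ℤ))
  have hjr' : (n:ℝ) ≤ |(j:ℝ)| * |2*(n:ℝ) + (j:ℝ)| := by
    rw [abs_mul, abs_neg] at hjr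
    have h2 : |2*(n:ℝ) - (-(j:ℝ))| = |2*(n:ℝ) + (j:ℝ)| := by ring_nf
    rwa [h2] at hjr
  have hAX : 24 * (n:ℝ) ≤ |A - X| := by
    rw [hfac, abs_mul, abs_mul]
    have h1 : |2 * Real.pi| = 2 * Real.pi := abs_of_pos (by linarith)
    rw [h1]
    have hkey : 4 * |(j:ℝ)| * (2*Real.pi * |2*(n:ℝ)+(j:ℝ)|) ≤
        |2*t - 2 * Real.pi * (j:ℝ)| * (2*Real.pi * |2*(n:ℝ)+(j:ℝ)|) :=
      mul_le_mul_of_nonneg_right hw (by positivity)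
    nlinarith [mul_le_mul_of_nonneg_left hjr' (by positivity : (0:ℝ) ≤ 8*Real.pi),
      mul_nonneg (by linarith : (0:ℝ) ≤ Real.pi - 3) hnpos.le]
  have htri : ‖(A:ℂ) - (X:ℂ)‖ ≤
      ‖lam - (X:ℂ)‖ + ‖lam - (A:ℂ)‖ := by
    have h := norm_sub_le_norm_sub_add_norm_sub ((A:ℝ):ℂ) lam ((X:ℝ):ℂ)
    rwa [norm_sub_rev ((A:ℝ):ℂ) lam, add_comm] at h
  have hax : ‖(A:ℂ) - (X:ℂ)‖ = |A - X| := by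
    rw [← Complex.ofReal_sub, Complex.norm_real, Real.norm_eq_abs]
  have hlamA : ‖lam - (A:ℂ)‖ ≤ (n:ℝ) := by
    refine le_trans hlam ?_
    nlinarith
  have hlow : (n:ℝ) ≤ ‖lam - (X:ℂ)‖ := by
    rw [hax] at htri
    linarith [hAX]
  have hXdenom : denom' n lam t j = (lam - (X:ℂ))⁻¹ := rfl
  rw [hXdenom, norm_inv]
  exact inv_anti₀ hnpos hlow

end MathieuAux
namespace MathieuAux

lemma abs_bk_le (a b : ℂ) (n k : ℕ) (lam : ℂ) (t : ℝ) (hn : 1 ≤ n)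
    (hden : ∀ j : ℤ, j ≠ 0 → j ≠ 2*(n:ℤ) → ‖denom n lam t j‖ ≤ ((n:ℝ))⁻¹) :
    ‖bk a b n k lam t‖ ≤
      (max (‖a‖) (‖b‖) + 1) *
        (2 * (max (‖a‖) (‖b‖) + 1) / n) ^ k := by
  classical
  set M := max (‖a‖) (‖b‖) + 1 with hMdef
  have hM0 : (0:ℝ) ≤ M := by
    have : (0:ℝ) ≤ max (‖a‖) (‖b‖) :=
      le_max_of_le_left (norm_nonneg a)
    linarith
  have hnpos : (0:ℝ) < n := by exact_mod_cast hn
  unfold bk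
  calc ‖∑ v ∈ Finset.univ.filter (Admissible n k),
        qc a b (2 * (n : ℤ) - psum v k) *
          ∏ i : Fin k, (qc a b (sgn (v i)) * denom n lam t (psum v ((i : ℕ) + 1)))‖
      ≤ ∑ v ∈ Finset.univ.filter (Admissible n k),
          ‖qc a b (2 * (n : ℤ) - psum v k) *
            ∏ i : Fin k, (qc a b (sgn (v i)) * denom n lam t (psum v ((i : ℕ) + 1)))‖ :=
        norm_sum_le _ _
    _ ≤ ∑ _v ∈ Finset.univ.filter (Admissible n k), M * (M * ((n:ℝ))⁻¹) ^ k := by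
        refine Finset.sum_le_sum (fun v hv => ?_)
        have hvA : Admissible n k v := (Finset.mem_filter.mp hv).2
        rw [norm_mul, norm_prod]
        have h2 : ∏ i : Fin k, ‖qc a b (sgn (v i)) *
            denom n lam t (psum v ((i : ℕ) + 1))‖ ≤ (M * ((n:ℝ))⁻¹) ^ k := by
          calc ∏ i : Fin k, ‖qc a b (sgn (v i)) *
                denom n lam t (psum v ((i : ℕ) + 1))‖
              ≤ ∏ _i : Fin k, (M * ((n:ℝ))⁻¹) := by
                refine Finset.prod_le_prod (fun _ _ => norm_nonneg _) (fun i _ => ?_)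
                rw [norm_mul]
                exact mul_le_mul (abs_qc_le a b _)
                  (hden _ (hvA i).1 (hvA i).2) (norm_nonneg _) hM0
            _ = (M * ((n:ℝ))⁻¹) ^ k := by
                rw [Finset.prod_const, Finset.card_univ, Fintype.card_fin]
        exact mul_le_mul (abs_qc_le a b _) h2 (Finset.prod_nonneg
          (fun _ _ => norm_nonneg _)) hM0
    _ ≤ ∑ _v ∈ (Finset.univ : Finset (Fin k → Bool)), M * (M * ((n:ℝ))⁻¹) ^ k :=
        Finset.sum_le_sum_of_subset_of_nonneg (Finset.filter_subset _ _)
          (fun _ _ _ => by positivity)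
    _ = (2:ℝ) ^ k * (M * (M * ((n:ℝ))⁻¹) ^ k) := by
        rw [Finset.sum_const, Finset.card_univ]
        simp [Fintype.card_fun, nsmul_eq_mul]
    _ = M * (2 * M / n) ^ k := by
        have h : (2 * M / (n:ℝ)) = 2 * (M * ((n:ℝ))⁻¹) := by ring
        rw [h, mul_pow 2 (M * ((n:ℝ))⁻¹) k]
        ring
  
lemma abs_bk'_le (a b : ℂ) (n k : ℕ) (lam : ℂ) (t : ℝ) (hn : 1 ≤ n)
    (hden : ∀ j : ℤ, j ≠ 0 → j ≠ -(2*(n:ℤ)) → ‖denom' n lam t j‖ ≤ ((n:ℝ))⁻¹) :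
    ‖bk' a b n k lam t‖ ≤
      (max (‖a‖) (‖b‖) + 1) *
        (2 * (max (‖a‖) (‖b‖) + 1) / n) ^ k := by
  classical
  set M := max (‖a‖) (‖b‖) + 1 with hMdef
  have hM0 : (0:ℝ) ≤ M := by
    have : (0:ℝ) ≤ max (‖a‖) (‖b‖) :=
      le_max_of_le_left (norm_nonneg a)
    linarith
  have hnpos : (0:ℝ) < n := by exact_mod_cast hn
  unfold bk'
  calc ‖∑ v ∈ Finset.univ.filter (Coadmissible n k),
        qc a b (-(2 * (n : ℤ)) - psum v k) *
          ∏ i : Fin k, (qc a b (sgn (v i)) * denom' n lam t (psum v ((i : ℕ) + 1)))‖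
      ≤ ∑ v ∈ Finset.univ.filter (Coadmissible n k),
          ‖qc a b (-(2 * (n : ℤ)) - psum v k) *
            ∏ i : Fin k, (qc a b (sgn (v i)) * denom' n lam t (psum v ((i : ℕ) + 1)))‖ :=
        norm_sum_le _ _
    _ ≤ ∑ _v ∈ Finset.univ.filter (Coadmissible n k), M * (M * ((n:ℝ))⁻¹) ^ k := by
        refine Finset.sum_le_sum (fun v hv => ?_)
        have hvA : Coadmissible n k v := (Finset.mem_filter.mp hv).2
        rw [norm_mul, norm_prod]
        have h2 : ∏ i : Fin k, ‖qc a b (sgn (v i)) *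
            denom' n lam t (psum v ((i : ℕ) + 1))‖ ≤ (M * ((n:ℝ))⁻¹) ^ k := by
          calc ∏ i : Fin k, ‖qc a b (sgn (v i)) *
                denom' n lam t (psum v ((i : ℕ) + 1))‖
              ≤ ∏ _i : Fin k, (M * ((n:ℝ))⁻¹) := by
                refine Finset.prod_le_prod (fun _ _ => norm_nonneg _) (fun i _ => ?_)
                rw [norm_mul]
                exact mul_le_mul (abs_qc_le a b _)
                  (hden _ (hvA i).1 (hvA i).2) (norm_nonneg _) hM0
            _ = (M * ((n:ℝ))⁻¹) ^ k := by
                rw [Finset.prod_const, Finset.card_univ, Fintype.card_fin]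
        exact mul_le_mul (abs_qc_le a b _) h2 (Finset.prod_nonneg
          (fun _ _ => norm_nonneg _)) hM0
    _ ≤ ∑ _v ∈ (Finset.univ : Finset (Fin k → Bool)), M * (M * ((n:ℝ))⁻¹) ^ k :=
        Finset.sum_le_sum_of_subset_of_nonneg (Finset.filter_subset _ _)
          (fun _ _ _ => by positivity)
    _ = (2:ℝ) ^ k * (M * (M * ((n:ℝ))⁻¹) ^ k) := by
        rw [Finset.sum_const, Finset.card_univ]
        simp [Fintype.card_fun, nsmul_eq_mul]
    _ = M * (2 * M / n) ^ k := by
        have h : (2 * M / (n:ℝ)) = 2 * (M * ((n:ℝ))⁻¹) := by ring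
        rw [h, mul_pow 2 (M * ((n:ℝ))⁻¹) k]
        ring

lemma bk_eq_zero (a b : ℂ) (n k : ℕ) (lam : ℂ) (t : ℝ) (hk : k + 1 < 2*n) :
    bk a b n k lam t = 0 := by
  unfold bk
  refine Finset.sum_eq_zero (fun v _ => ?_)
  obtain ⟨h1, h2⟩ := abs_le.mp (abs_psum_le v k)
  rw [qc_eq_zero a b (by omega) (by omega), zero_mul]

lemma bk'_eq_zero (a b : ℂ) (n k : ℕ) (lam : ℂ) (t : ℝ) (hk : k + 1 < 2*n) :
    bk' a b n k lam t = 0 := by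
  unfold bk'
  refine Finset.sum_eq_zero (fun v _ => ?_)
  obtain ⟨h1, h2⟩ := abs_le.mp (abs_psum_le v k)
  rw [qc_eq_zero a b (by omega) (by omega), zero_mul]

end MathieuAux
namespace MathieuAux

lemma tsum_bound (F : ℕ → ℂ) (M r : ℝ) (hM : 1 ≤ M) (hr0 : 0 < r) (hr : r ≤ 1/2)
    (n : ℕ) (hn : 4 ≤ n)
    (hzero : ∀ k : ℕ, k + 2 < 2*n → F k = 0)
    (hle : ∀ k : ℕ, ‖F k‖ ≤ M * r^(k+1)) :
    Summable (fun k : ℕ => ‖F k‖) ∧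
      ‖∑' k : ℕ, F k‖ ≤ 32 * M * r^5 := by
  have key : ∀ k : ℕ, ‖F k‖ ≤ (16 * M * r^5) * (1/2:ℝ)^k := by
    intro k
    by_cases hk : k + 2 < 2*n
    · rw [hzero k hk]
      simp only [norm_zero]
      positivity
    · have hk4 : 4 ≤ k := by omega
      refine le_trans (hle k) ?_
      have e1 : r^(k+1) = r^5 * r^(k-4) := by
        rw [← pow_add]
        congr 1
        omega
      have e2 : r^(k-4) ≤ (1/2:ℝ)^(k-4) := pow_le_pow_left₀ hr0.le hr _
      have e3 : (1/2:ℝ)^(k-4) = 16 * (1/2:ℝ)^k := by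
        have e4 : (1/2:ℝ)^k = (1/2:ℝ)^(k-4) * (1/2:ℝ)^4 := by
          rw [← pow_add]
          congr 1
          omega
        rw [e4]
        ring
      rw [e1]
      calc M * (r^5 * r^(k-4)) ≤ M * (r^5 * ((1/2:ℝ)^(k-4))) := by
            gcongr
        _ = (16 * M * r^5) * (1/2:ℝ)^k := by rw [e3]; ring
  have hgeo : Summable (fun k : ℕ => (16 * M * r^5) * (1/2:ℝ)^k) :=
    (summable_geometric_of_lt_one (by norm_num) (by norm_num)).mul_left _
  have hsum : Summable (fun k : ℕ => ‖F k‖) :=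
    Summable.of_nonneg_of_le (fun k => norm_nonneg _) key hgeo
  refine ⟨hsum, ?_⟩
  have hsum' : Summable (fun k : ℕ => ‖F k‖) := by
    exact hsum
  have h1 : ‖∑' k : ℕ, F k‖ ≤ ∑' k : ℕ, ‖F k‖ := norm_tsum_le_tsum_norm hsum'
  refine le_trans h1 ?_
  have h2 : ∑' k : ℕ, ‖F k‖ ≤ ∑' k : ℕ, (16 * M * r^5) * (1/2:ℝ)^k := by
    refine Summable.tsum_le_tsum (fun k => ?_) hsum' hgeo
    exact key k
  refine le_trans h2 ?_
  rw [tsum_mul_left, tsum_geometric_of_lt_one (by norm_num) (by norm_num)]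
  norm_num
  nlinarith [pow_pos hr0 5]

end MathieuAux
open MathieuAux in
/-- Formula (57): on `U(n,t,ρ)` the series `B(λ,t)` and `B′(λ,t)` converge
absolutely and are `O(n⁻⁵)`. -/
theorem stmt6 (a b : ℂ) (ρ : ℝ) (hρ₀ : 0 < ρ) (hρ₁ : ρ < 1 / (15 * Real.pi)) :
    ∃ K : ℝ, 0 < K ∧ ∃ N : ℕ, ∀ n : ℕ, N < n →
      ∀ t ∈ Set.Icc (0 : ℝ) ρ, ∀ lam : ℂ,
      ‖lam - (((2 * Real.pi * (n : ℝ) + t) ^ 2 : ℝ) : ℂ)‖ ≤ 15 * Real.pi * (n : ℝ) * ρ →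
        Summable (fun k : ℕ => ‖bk a b n (k + 1) lam t‖) ∧
        Summable (fun k : ℕ => ‖bk' a b n (k + 1) lam t‖) ∧
        ‖Bfun a b n lam t‖ ≤ K * ((n : ℝ) ^ 5)⁻¹ ∧
        ‖B'fun a b n lam t‖ ≤ K * ((n : ℝ) ^ 5)⁻¹ := by
  have hπ := Real.pi_gt_three
  set M := max (‖a‖) (‖b‖) + 1 with hMdef
  have hM1 : 1 ≤ M := by
    have : (0:ℝ) ≤ max (‖a‖) (‖b‖) :=
      le_max_of_le_left (norm_nonneg a)
    linarith
  refine ⟨1024 * M^6, by positivity, ⌈4*M⌉₊ + 4, ?_⟩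
  intro n hn t ht lam hlam
  obtain ⟨ht0, htρ⟩ := ht
  have hρ1 : 15 * Real.pi * ρ ≤ 1 := by
    rw [lt_div_iff₀ (by positivity)] at hρ₁
    nlinarith
  have hn4 : 4 ≤ n := by omega
  have hn1 : 1 ≤ n := by omega
  have hnpos : (0:ℝ) < n := by exact_mod_cast hn1
  have hnM : 4 * M ≤ (n:ℝ) := by
    have h1 : 4*M ≤ (⌈4*M⌉₊ : ℝ) := Nat.le_ceil _
    have h2 : (⌈4*M⌉₊ : ℝ) ≤ (n:ℝ) := by exact_mod_cast (by omega : ⌈4*M⌉₊ ≤ n)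
    linarith
  set r := 2 * M / (n:ℝ) with hrdef
  have hr0 : 0 < r := by positivity
  have hr : r ≤ 1/2 := by
    rw [hrdef, div_le_iff₀ hnpos]
    linarith
  have hden : ∀ j : ℤ, j ≠ 0 → j ≠ 2*(n:ℤ) →
      ‖denom n lam t j‖ ≤ ((n:ℝ))⁻¹ :=
    fun j hj0 hj2 => abs_denom_le n hn1 hρ1 ht0 htρ hlam hj0 hj2
  have hden' : ∀ j : ℤ, j ≠ 0 → j ≠ -(2*(n:ℤ)) →
      ‖denom' n lam t j‖ ≤ ((n:ℝ))⁻¹ :=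
    fun j hj0 hj2 => abs_denom'_le n hn1 hρ1 ht0 htρ hlam hj0 hj2
  have hB := tsum_bound (fun k => bk a b n (k+1) lam t) M r hM1 hr0 hr n hn4
    (fun k hk => bk_eq_zero a b n (k+1) lam t (by omega))
    (fun k => by
      have := abs_bk_le a b n (k+1) lam t hn1 hden
      rw [hrdef]
      exact this)
  have hB' := tsum_bound (fun k => bk' a b n (k+1) lam t) M r hM1 hr0 hr n hn4
    (fun k hk => bk'_eq_zero a b n (k+1) lam t (by omega))
    (fun k => by
      have := abs_bk'_le a b n (k+1) lam t hn1 hden'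
      rw [hrdef]
      exact this)
  have hfin : 32 * M * r^5 ≤ 1024 * M^6 * (((n:ℝ))^5)⁻¹ := by
    rw [hrdef]
    rw [div_pow]
    rw [div_eq_mul_inv]
    have : (2 * M)^5 = 32 * M^5 := by ring
    rw [this]
    have h5 : (0:ℝ) < ((n:ℝ))^5 := by positivity
    have : 32 * M * (32 * M^5 * (((n:ℝ))^5)⁻¹) = 1024 * M^6 * (((n:ℝ))^5)⁻¹ := by ring
    rw [this]
  exact ⟨hB.1, hB'.1, le_trans hB.2 hfin, le_trans hB'.2 hfin⟩
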